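/- Let N ≥ 3 and let g : ℝ^N \ {0} → ℝ be twice continuously differentiable. Define the Kelvin transform k(g)(x) = |x|^{−(N−2)} · g(x/|x|²) for x ≠ 0. Then k(g) is twice continuously differentiable on ℝ^N \ {0} and Δ(k(g))(x) = |x|^{−(N+2)} · (Δg)(x/|x|²) for every x ≠ 0. -/

import Mathlib

open scoped BigOperators

/-- Second directional derivative of `f` at `x` in direction `v`. -/
noncomputable def secondDeriv {E : Type*} [NormedAddCommGroup E] [NormedSpace ℝ E]
    (f : E → ℝ) (v : E) (x : E) : ℝ :=
  fderiv ℝ (fun y => fderiv ℝ f y v) x v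

/-- The Laplacian (sum of second partial derivatives) on `ℝ^N`. -/
noncomputable def laplacian {N : ℕ} (f : EuclideanSpace ℝ (Fin N) → ℝ)
    (x : EuclideanSpace ℝ (Fin N)) : ℝ :=
  ∑ i : Fin N, secondDeriv f (EuclideanSpace.single i 1) x

/-- The Kelvin transform `k(g)(x) = |x|^{-(N-2)} g(x/|x|²)`. -/
noncomputable def kelvin (N : ℕ) (g : EuclideanSpace ℝ (Fin N) → ℝ)
    (x : EuclideanSpace ℝ (Fin N)) : ℝ :=
  ‖x‖ ^ (-((N : ℝ) - 2)) * g ((‖x‖ ^ 2)⁻¹ • x)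

namespace KelvinProof

open scoped RealInnerProductSpace

variable {N : ℕ}

local notation "E" => EuclideanSpace ℝ (Fin N)

/-- inversion -/
noncomputable def iot (y : E) : E := (‖y‖ ^ 2)⁻¹ • y

/-- the exponent -/
noncomputable def q (N : ℕ) : ℝ := -((N : ℝ) - 2) / 2

lemma sq_pos {y : E} (hy : y ≠ 0) : 0 < ‖y‖ ^ 2 := by
  have : 0 < ‖y‖ := norm_pos_iff.mpr hy
  positivity

lemma iot_ne_zero {y : E} (hy : y ≠ 0) : iot y ≠ 0 := by
  simp [iot, smul_eq_zero, hy, (sq_pos hy).ne']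

lemma sum_coord_smul (x : E) : ∑ i, x i • (EuclideanSpace.single i (1:ℝ)) = x := by
  have := (EuclideanSpace.basisFun (Fin N) ℝ).sum_repr x
  simpa [EuclideanSpace.basisFun_apply, EuclideanSpace.basisFun_repr] using this

lemma sum_coord_clm (x : E) (φ : E →L[ℝ] ℝ) :
    ∑ i, x i * φ (EuclideanSpace.single i (1:ℝ)) = φ x := by
  calc ∑ i, x i * φ (EuclideanSpace.single i (1:ℝ))
      = ∑ i, φ (x i • EuclideanSpace.single i (1:ℝ)) := by
        simp [map_smul, smul_eq_mul]
    _ = φ (∑ i, x i • EuclideanSpace.single i (1:ℝ)) := (map_sum φ _ _).symm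
    _ = φ x := by rw [sum_coord_smul]

lemma inner_single (x : E) (i : Fin N) : ⟪EuclideanSpace.single i (1:ℝ), x⟫ = x i := by
  simp [PiLp.inner_apply, EuclideanSpace.single_apply]

lemma sum_coord_sq (x : E) : ∑ i, x i * x i = ‖x‖ ^ 2 := by
  rw [← real_inner_self_eq_norm_sq]
  simp [PiLp.inner_apply, RCLike.inner_apply]
  rw [EuclideanSpace.norm_eq, Real.sq_sqrt (by positivity)]
  simp only [Real.norm_eq_abs, sq_abs, sq, abs_mul_abs_self]

/-- kelvin in rpow-of-norm-sq form -/
lemma kelvin_eq (hN : 3 ≤ N) (g : E → ℝ) :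
    kelvin N g = fun y => (‖y‖ ^ 2 : ℝ) ^ q N * g (iot y) := by
  have hq : q N ≠ 0 := by
    have : (3:ℝ) ≤ (N:ℝ) := by exact_mod_cast hN
    simp only [q]
    intro h
    have : (N:ℝ) - 2 = 0 := by linarith [neg_div 2 ((N:ℝ)-2)]
    linarith
  funext y
  unfold kelvin iot
  congr 1
  rcases eq_or_ne y 0 with rfl | hy
  · rw [norm_zero]
    rw [Real.zero_rpow, zero_pow, Real.zero_rpow hq]
    · norm_num
    · intro h
      have : (3:ℝ) ≤ (N:ℝ) := by exact_mod_cast hN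
      linarith
  · have h0 : (0:ℝ) ≤ ‖y‖ := norm_nonneg y
    rw [← Real.rpow_natCast ‖y‖ 2, ← Real.rpow_mul h0]
    congr 1
    simp [q]
    ring


lemma hasFDerivAt_S (x : E) :
    HasFDerivAt (fun y : E => ‖y‖ ^ 2) (2 • innerSL ℝ x) x :=
  (hasStrictFDerivAt_norm_sq x).hasFDerivAt

/-- derivative of the inversion map -/
noncomputable def dI (x : E) : E →L[ℝ] E :=
  (‖x‖ ^ 2)⁻¹ • ContinuousLinearMap.id ℝ (EuclideanSpace ℝ (Fin N)) +
    ((-(((‖x‖ ^ 2 : ℝ)) ^ 2)⁻¹) • (2 • innerSL ℝ x)).smulRight x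

lemma hasFDerivAt_iot {x : E} (hx : x ≠ 0) : HasFDerivAt iot (dI x) x := by
  have h1 := hasFDerivAt_S (N := N) x
  have h2 : HasFDerivAt (fun y : E => (‖y‖ ^ 2)⁻¹)
      ((-(((‖x‖ ^ 2 : ℝ)) ^ 2)⁻¹) • (2 • innerSL ℝ x)) x :=
    (hasDerivAt_inv (sq_pos hx).ne').comp_hasFDerivAt x h1
  exact h2.smul (hasFDerivAt_id x)

lemma clm_dI (x v : E) (φ : E →L[ℝ] ℝ) :
    φ (dI x v) = (‖x‖ ^ 2)⁻¹ * φ v - 2 * ((‖x‖ ^ 2)⁻¹ * (‖x‖ ^ 2)⁻¹) * ⟪x, v⟫ * φ x := by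
  simp only [dI, ContinuousLinearMap.add_apply, ContinuousLinearMap.smul_apply,
    ContinuousLinearMap.id_apply, ContinuousLinearMap.smulRight_apply, innerSL_apply_apply,
    map_add, map_smul, smul_eq_mul, mul_inv]
  ring

lemma clm2_dI (x v w : E) (Ψ : E →L[ℝ] E →L[ℝ] ℝ) :
    Ψ (dI x v) w = (‖x‖ ^ 2)⁻¹ * Ψ v w - 2 * ((‖x‖ ^ 2)⁻¹ * (‖x‖ ^ 2)⁻¹) * ⟪x, v⟫ * Ψ x w := by
  simp only [dI, ContinuousLinearMap.add_apply, ContinuousLinearMap.smul_apply,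
    ContinuousLinearMap.id_apply, ContinuousLinearMap.smulRight_apply, innerSL_apply_apply,
    map_add, map_smul, smul_eq_mul, mul_inv]
  ring


lemma isOpen_ne_zero : IsOpen {x : E | x ≠ 0} := isOpen_compl_singleton

lemma contDiffAt_of_hg {g : E → ℝ} (hg : ContDiffOn ℝ 2 g {x : E | x ≠ 0})
    {z : E} (hz : z ≠ 0) : ContDiffAt ℝ 2 g z :=
  (hg z hz).contDiffAt (isOpen_ne_zero.mem_nhds hz)

lemma fderiv_kelvin {g : E → ℝ} (hN : 3 ≤ N) (hg : ContDiffOn ℝ 2 g {x : E | x ≠ 0})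
    {y : E} (hy : y ≠ 0) (v : E) :
    fderiv ℝ (kelvin N g) y v =
      (2 * q N) * (‖y‖ ^ 2 : ℝ) ^ (q N - 1) * ⟪y, v⟫ * g (iot y)
      + (‖y‖ ^ 2 : ℝ) ^ (q N - 1) * (fderiv ℝ g (iot y) v)
      - 2 * ((‖y‖ ^ 2 : ℝ) ^ (q N - 2)) * ⟪y, v⟫ * (fderiv ℝ g (iot y) y) := by
  have hSpos := sq_pos hy
  have hzy : iot y ≠ 0 := iot_ne_zero hy
  have hgz : ContDiffAt ℝ 2 g (iot y) := contDiffAt_of_hg hg hzy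
  have hg1 : HasFDerivAt g (fderiv ℝ g (iot y)) (iot y) :=
    (hgz.differentiableAt two_ne_zero).hasFDerivAt
  have hC : HasFDerivAt (fun y' => g (iot y')) ((fderiv ℝ g (iot y)).comp (dI y)) y :=
    hg1.comp y (hasFDerivAt_iot hy)
  have hA : HasFDerivAt (fun y' : E => (‖y'‖ ^ 2 : ℝ) ^ q N)
      ((q N * (‖y‖ ^ 2 : ℝ) ^ (q N - 1)) • (2 • innerSL ℝ y)) y :=
    (hasFDerivAt_S y).rpow_const (Or.inl hSpos.ne')
  have htot := hA.mul hC
  erw [kelvin_eq hN g, htot.fderiv]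
  have e1 : (‖y‖ ^ 2 : ℝ) ^ q N * (‖y‖ ^ 2)⁻¹ = (‖y‖ ^ 2 : ℝ) ^ (q N - 1) := by
    rw [Real.rpow_sub hSpos, Real.rpow_one, div_eq_mul_inv]
  have e2 : (‖y‖ ^ 2 : ℝ) ^ q N * ((‖y‖ ^ 2)⁻¹ * (‖y‖ ^ 2)⁻¹) = (‖y‖ ^ 2 : ℝ) ^ (q N - 2) := by
    rw [show q N - 2 = q N - 1 - 1 by ring, Real.rpow_sub hSpos, Real.rpow_one, ← e1,
      div_eq_mul_inv]
    ring
  simp only [ContinuousLinearMap.add_apply, ContinuousLinearMap.smul_apply,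
    ContinuousLinearMap.comp_apply, ContinuousLinearMap.smul_apply, innerSL_apply_apply,
    smul_eq_mul, clm_dI]
  rw [← e1, ← e2]
  ring


lemma rpow_step {S : ℝ} (hS : 0 < S) (a : ℝ) : S ^ a * S⁻¹ = S ^ (a - 1) := by
  rw [Real.rpow_sub hS, Real.rpow_one, div_eq_mul_inv]

lemma secondDeriv_kelvin {g : E → ℝ} (hN : 3 ≤ N) (hg : ContDiffOn ℝ 2 g {x : E | x ≠ 0})
    {x : E} (hx : x ≠ 0) (v : E) :
    secondDeriv (kelvin N g) v x =
      4*q N*(q N-1) * (‖x‖^2:ℝ)^(q N-2) * (⟪x,v⟫*⟪x,v⟫) * g (iot x)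
      + 2*q N * (‖x‖^2:ℝ)^(q N-1) * ⟪v,v⟫ * g (iot x)
      + (2*q N) * (‖x‖^2:ℝ)^(q N-2) * ⟪x,v⟫ * fderiv ℝ g (iot x) v
      - 4*q N * (‖x‖^2:ℝ)^(q N-3) * (⟪x,v⟫*⟪x,v⟫) * fderiv ℝ g (iot x) x
      + 2*(q N-1) * (‖x‖^2:ℝ)^(q N-2) * ⟪x,v⟫ * fderiv ℝ g (iot x) v
      + (‖x‖^2:ℝ)^(q N-2) * (fderiv ℝ (fderiv ℝ g) (iot x) v v)
      - 2 * (‖x‖^2:ℝ)^(q N-3) * ⟪x,v⟫ * (fderiv ℝ (fderiv ℝ g) (iot x) x v)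
      - 4*(q N-2) * (‖x‖^2:ℝ)^(q N-3) * (⟪x,v⟫*⟪x,v⟫) * fderiv ℝ g (iot x) x
      - 2 * (‖x‖^2:ℝ)^(q N-2) * ⟪v,v⟫ * fderiv ℝ g (iot x) x
      - 2 * (‖x‖^2:ℝ)^(q N-2) * ⟪x,v⟫ * fderiv ℝ g (iot x) v
      - 2 * (‖x‖^2:ℝ)^(q N-3) * ⟪x,v⟫ * (fderiv ℝ (fderiv ℝ g) (iot x) v x)
      + 4 * (‖x‖^2:ℝ)^(q N-4) * (⟪x,v⟫*⟪x,v⟫) * (fderiv ℝ (fderiv ℝ g) (iot x) x x) := by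
  have hSpos := sq_pos hx
  have hzx : iot x ≠ 0 := iot_ne_zero hx
  have hgz : ContDiffAt ℝ 2 g (iot x) := contDiffAt_of_hg hg hzx
  have hg1 : HasFDerivAt g (fderiv ℝ g (iot x)) (iot x) :=
    (hgz.differentiableAt two_ne_zero).hasFDerivAt
  have hg2 : HasFDerivAt (fderiv ℝ g) (fderiv ℝ (fderiv ℝ g) (iot x)) (iot x) :=
    ((hgz.fderiv_right (m := 1) (by rw [one_add_one_eq_two])).differentiableAt one_ne_zero).hasFDerivAt
  have hiot := hasFDerivAt_iot hx
  have hmem : {y : E | y ≠ 0} ∈ nhds x := isOpen_ne_zero.mem_nhds hx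
  have hev : (fun y => fderiv ℝ (kelvin N g) y v) =ᶠ[nhds x] (fun y =>
      (2 * q N) * (‖y‖ ^ 2 : ℝ) ^ (q N - 1) * ⟪y, v⟫ * g (iot y)
      + (‖y‖ ^ 2 : ℝ) ^ (q N - 1) * (fderiv ℝ g (iot y) v)
      - 2 * ((‖y‖ ^ 2 : ℝ) ^ (q N - 2)) * ⟪y, v⟫ * (fderiv ℝ g (iot y) y)) :=
    Filter.eventually_of_mem hmem (fun y hy => fderiv_kelvin hN hg hy v)
  have hA1 : HasFDerivAt (fun y : E => (‖y‖ ^ 2 : ℝ) ^ (q N - 1))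
      (((q N - 1) * (‖x‖ ^ 2 : ℝ) ^ (q N - 2)) • (2 • innerSL ℝ x)) x := by
    have h := (hasFDerivAt_S x).rpow_const (p := q N - 1) (Or.inl hSpos.ne')
    rwa [show q N - 1 - 1 = q N - 2 by ring] at h
  have hA2 : HasFDerivAt (fun y : E => (‖y‖ ^ 2 : ℝ) ^ (q N - 2))
      (((q N - 2) * (‖x‖ ^ 2 : ℝ) ^ (q N - 3)) • (2 • innerSL ℝ x)) x := by
    have h := (hasFDerivAt_S x).rpow_const (p := q N - 2) (Or.inl hSpos.ne')
    rwa [show q N - 2 - 1 = q N - 3 by ring] at h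
  have hB : HasFDerivAt (fun y : E => (⟪y, v⟫ : ℝ)) (innerSL ℝ v) x := by
    have h := (innerSL ℝ v).hasFDerivAt (x := x)
    have e : (fun y : E => (⟪y, v⟫ : ℝ)) = fun y => innerSL ℝ v y := by
      funext y
      exact (real_inner_comm y v).symm
    rw [e]
    exact h
  have hC : HasFDerivAt (fun y => g (iot y)) ((fderiv ℝ g (iot x)).comp (dI x)) x :=
    hg1.comp x hiot
  have hG : HasFDerivAt (fun y => fderiv ℝ g (iot y))
      ((fderiv ℝ (fderiv ℝ g) (iot x)).comp (dI x)) x := hg2.comp x hiot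
  have hD := hG.clm_apply (hasFDerivAt_const (𝕜 := ℝ) v x)
  have hE := hG.clm_apply (hasFDerivAt_id x)
  simp only [id_eq] at hE
  have hT1 := ((hA1.const_mul (2 * q N)).mul hB).mul hC
  have hT2 := hA1.mul hD
  have hT3 := ((hA2.const_mul 2).mul hB).mul hE
  have htot := (hT1.add hT2).sub hT3
  have key := Filter.EventuallyEq.fderiv_eq (𝕜 := ℝ) hev
  simp only [secondDeriv]
  erw [key, htot.fderiv]
  have e1 : (‖x‖ ^ 2 : ℝ) ^ (q N - 1) * (‖x‖ ^ 2)⁻¹ = (‖x‖ ^ 2 : ℝ) ^ (q N - 2) := by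
    rw [rpow_step hSpos, show q N - 1 - 1 = q N - 2 by ring]
  have e2 : (‖x‖ ^ 2 : ℝ) ^ (q N - 2) * (‖x‖ ^ 2)⁻¹ = (‖x‖ ^ 2 : ℝ) ^ (q N - 3) := by
    rw [rpow_step hSpos, show q N - 2 - 1 = q N - 3 by ring]
  have e3 : (‖x‖ ^ 2 : ℝ) ^ (q N - 3) * (‖x‖ ^ 2)⁻¹ = (‖x‖ ^ 2 : ℝ) ^ (q N - 4) := by
    rw [rpow_step hSpos, show q N - 3 - 1 = q N - 4 by ring]
  simp only [ContinuousLinearMap.add_apply, ContinuousLinearMap.sub_apply,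
    ContinuousLinearMap.smul_apply, ContinuousLinearMap.comp_apply,
    ContinuousLinearMap.flip_apply, ContinuousLinearMap.comp_zero,
    ContinuousLinearMap.zero_apply, ContinuousLinearMap.id_apply,
    ContinuousLinearMap.smulRight_apply, innerSL_apply_apply, smul_eq_mul,
    clm_dI, clm2_dI, Pi.mul_apply]
  have hn : ‖x‖ ≠ 0 := norm_ne_zero_iff.mpr hx
  have p1 : (‖x‖ ^ 2 : ℝ) ^ (q N - 1) = (‖x‖ ^ 2 : ℝ) ^ (q N - 4) * (‖x‖^2*‖x‖^2*‖x‖^2) := by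
    rw [show q N - 1 = (q N - 4) + 3 by ring, Real.rpow_add hSpos]
    congr 1
    rw [show (3:ℝ) = ((3:ℕ):ℝ) by norm_num, Real.rpow_natCast]
    ring
  have p2 : (‖x‖ ^ 2 : ℝ) ^ (q N - 2) = (‖x‖ ^ 2 : ℝ) ^ (q N - 4) * (‖x‖^2*‖x‖^2) := by
    rw [show q N - 2 = (q N - 4) + 2 by ring, Real.rpow_add hSpos]
    congr 1
    rw [show (2:ℝ) = ((2:ℕ):ℝ) by norm_num, Real.rpow_natCast]
    ring
  have p3 : (‖x‖ ^ 2 : ℝ) ^ (q N - 3) = (‖x‖ ^ 2 : ℝ) ^ (q N - 4) * (‖x‖^2) := by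
    rw [show q N - 3 = (q N - 4) + 1 by ring, Real.rpow_add hSpos, Real.rpow_one]
  rw [p1, p2, p3]
  field_simp
  ring


lemma laplacian_eq_sum {g : E → ℝ} (hg : ContDiffOn ℝ 2 g {x : E | x ≠ 0})
    {z : E} (hz : z ≠ 0) :
    laplacian g z = ∑ i : Fin N,
      fderiv ℝ (fderiv ℝ g) z (EuclideanSpace.single i 1) (EuclideanSpace.single i 1) := by
  have hgz : ContDiffAt ℝ 2 g z := contDiffAt_of_hg hg hz
  have hg2 : HasFDerivAt (fderiv ℝ g) (fderiv ℝ (fderiv ℝ g) z) z :=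
    ((hgz.fderiv_right (m := 1) (by rw [one_add_one_eq_two])).differentiableAt one_ne_zero).hasFDerivAt
  unfold laplacian secondDeriv
  refine Finset.sum_congr rfl fun i _ => ?_
  have h := hg2.clm_apply (hasFDerivAt_const (𝕜 := ℝ) (EuclideanSpace.single i (1:ℝ)) z)
  rw [h.fderiv]
  simp

end KelvinProof

open scoped RealInnerProductSpace in
theorem statement5 (N : ℕ) (hN : 3 ≤ N) (g : EuclideanSpace ℝ (Fin N) → ℝ)
    (hg : ContDiffOn ℝ 2 g {x : EuclideanSpace ℝ (Fin N) | x ≠ 0}) :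
    ContDiffOn ℝ 2 (kelvin N g) {x : EuclideanSpace ℝ (Fin N) | x ≠ 0} ∧
    ∀ x : EuclideanSpace ℝ (Fin N), x ≠ 0 →
      laplacian (kelvin N g) x = ‖x‖ ^ (-((N : ℝ) + 2)) * laplacian g ((‖x‖ ^ 2)⁻¹ • x) := by
  classical
  constructor
  · -- smoothness
    intro x hx
    have hx' : x ≠ 0 := hx
    apply ContDiffAt.contDiffWithinAt
    have hnorm : ContDiffAt ℝ 2 (fun y : EuclideanSpace ℝ (Fin N) => ‖y‖) x :=
      contDiffAt_norm (𝕜 := ℝ) hx'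
    have h1 : ContDiffAt ℝ 2 (fun y : EuclideanSpace ℝ (Fin N) => ‖y‖ ^ (-((N:ℝ)-2))) x :=
      (Real.contDiffAt_rpow_const_of_ne (norm_ne_zero_iff.mpr hx')).comp x hnorm
    have hs : ContDiffAt ℝ 2 (fun y : EuclideanSpace ℝ (Fin N) => (‖y‖ ^ 2)⁻¹) x :=
      ((contDiffAt_id.norm_sq ℝ).inv (KelvinProof.sq_pos hx').ne')
    have hiot : ContDiffAt ℝ 2 (fun y : EuclideanSpace ℝ (Fin N) => (‖y‖ ^ 2)⁻¹ • y) x :=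
      hs.smul contDiffAt_id
    have hgi : ContDiffAt ℝ 2 (fun y : EuclideanSpace ℝ (Fin N) => g ((‖y‖ ^ 2)⁻¹ • y)) x :=
      (KelvinProof.contDiffAt_of_hg hg (KelvinProof.iot_ne_zero hx')).comp x hiot
    exact h1.mul hgi
  · -- the Laplacian identity
    intro x hx
    have hSpos := KelvinProof.sq_pos hx
    have hn : ‖x‖ ≠ 0 := norm_ne_zero_iff.mpr hx
    have hzx0 : KelvinProof.iot x ≠ 0 := KelvinProof.iot_ne_zero hx
    rw [show ((‖x‖ ^ 2)⁻¹ • x : EuclideanSpace ℝ (Fin N)) = KelvinProof.iot x from rfl,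
      KelvinProof.laplacian_eq_sum hg hzx0]
    set z := KelvinProof.iot x with hzdef
    have hzx : z ≠ 0 := KelvinProof.iot_ne_zero hx
    set Q := KelvinProof.q N with hQdef
    set S : ℝ := ‖x‖ ^ 2 with hSdef
    -- abbreviations
    set P : ℝ := g z with hP
    set G1 : EuclideanSpace ℝ (Fin N) →L[ℝ] ℝ := fderiv ℝ g z with hG1
    set G2 := fderiv ℝ (fderiv ℝ g) z with hG2
    have hterm : ∀ i : Fin N,
        secondDeriv (kelvin N g) (EuclideanSpace.single i 1) x =
          (4*Q*(Q-1) * S^(Q-2) * P - 4*Q * S^(Q-3) * (G1 x)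
             - 4*(Q-2) * S^(Q-3) * (G1 x) + 4 * S^(Q-4) * (G2 x x)) * (x i * x i)
          + (2*Q * S^(Q-1) * P - 2 * S^(Q-2) * (G1 x))
          + ((2*Q) * S^(Q-2) + 2*(Q-1) * S^(Q-2) - 2 * S^(Q-2)) *
              (x i * G1 (EuclideanSpace.single i 1))
          + S^(Q-2) * (G2 (EuclideanSpace.single i 1) (EuclideanSpace.single i 1))
          + (-2) * S^(Q-3) * (x i * (G2 x) (EuclideanSpace.single i 1))
          + (-2) * S^(Q-3) * (x i * (G2.flip x) (EuclideanSpace.single i 1)) := by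
      intro i
      rw [KelvinProof.secondDeriv_kelvin hN hg hx (EuclideanSpace.single i 1)]
      have hbi : ⟪x, EuclideanSpace.single i (1:ℝ)⟫ = x i := by
        simp [EuclideanSpace.inner_single_right]
      have hnn : ⟪EuclideanSpace.single i (1:ℝ), EuclideanSpace.single i (1:ℝ)⟫ = 1 := by
        simp [EuclideanSpace.inner_single_right, EuclideanSpace.single_apply]
      rw [hbi, hnn]
      simp only [ContinuousLinearMap.flip_apply, ← hzdef, ← hQdef, ← hSdef, ← hP, ← hG1, ← hG2]
      ring
    unfold laplacian
    rw [Finset.sum_congr rfl fun i _ => hterm i]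
    simp only [Finset.sum_add_distrib, ← Finset.mul_sum, KelvinProof.sum_coord_sq,
      KelvinProof.sum_coord_clm, Finset.sum_const, Finset.card_univ, Fintype.card_fin,
      nsmul_eq_mul]
    have hr : ‖x‖ ^ (-((N : ℝ) + 2)) = S ^ (Q - 2) := by
      rw [hSdef, ← Real.rpow_natCast ‖x‖ 2, ← Real.rpow_mul (norm_nonneg x)]
      congr 1
      rw [hQdef]
      unfold KelvinProof.q
      push_cast
      ring
    rw [hr]
    have p1 : (S : ℝ) ^ (Q - 1) = S ^ (Q - 4) * (S*S*S) := by
      rw [show Q - 1 = (Q - 4) + 3 by ring, Real.rpow_add hSpos]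
      congr 1
      rw [show (3:ℝ) = ((3:ℕ):ℝ) by norm_num, Real.rpow_natCast]
      ring
    have p2 : (S : ℝ) ^ (Q - 2) = S ^ (Q - 4) * (S*S) := by
      rw [show Q - 2 = (Q - 4) + 2 by ring, Real.rpow_add hSpos]
      congr 1
      rw [show (2:ℝ) = ((2:ℕ):ℝ) by norm_num, Real.rpow_natCast]
      ring
    have p3 : (S : ℝ) ^ (Q - 3) = S ^ (Q - 4) * S := by
      rw [show Q - 3 = (Q - 4) + 1 by ring, Real.rpow_add hSpos, Real.rpow_one]
    have hG2flip : ∀ w, G2.flip x w = G2 w x := fun w => rfl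
    have hQval : Q = -((N:ℝ)-2)/2 := hQdef
    rw [p1, p2, p3, hQval]
    have hSne : S ≠ 0 := hSpos.ne'
    field_simp
    rw [hG2flip, ← hSdef]
    ring
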